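/- Let (D1, D, D2, i^*, i_*, i^!, j_!, j^*, j_*) be a recollement of triangulated categories and let T be a thick subcategory of D. Set T1 = i^* T and T2 = j^* T. If i_* T1 ⊆ T and j_* T2 ⊆ T, then there is an induced recollement of Verdier quotient categories (D1/T1, D/T, D2/T2). -/

import Mathlib

open CategoryTheory Limits Pretriangulated

universe u

/-- A recollement of triangulated categories (Beilinson–Bernstein–Deligne). -/
structure Recollement (T₁ T T₂ : Type*) [Category T₁] [Category T] [Category T₂]
    [HasShift T₁ ℤ] [HasShift T ℤ] [HasShift T₂ ℤ]
    [Preadditive T₁] [Preadditive T] [Preadditive T₂]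
    [HasZeroObject T₁] [HasZeroObject T] [HasZeroObject T₂]
    [∀ n : ℤ, (shiftFunctor T₁ n).Additive] [∀ n : ℤ, (shiftFunctor T n).Additive]
    [∀ n : ℤ, (shiftFunctor T₂ n).Additive]
    [Pretriangulated T₁] [Pretriangulated T] [Pretriangulated T₂] where
  iStar : T ⥤ T₁
  iLower : T₁ ⥤ T
  iShriek : T ⥤ T₁
  jShriek : T₂ ⥤ T
  jStar : T ⥤ T₂
  jLower : T₂ ⥤ T
  iStarCS : iStar.CommShift ℤ
  iLowerCS : iLower.CommShift ℤ
  iShriekCS : iShriek.CommShift ℤ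
  jShriekCS : jShriek.CommShift ℤ
  jStarCS : jStar.CommShift ℤ
  jLowerCS : jLower.CommShift ℤ
  iStarTr : letI := iStarCS; iStar.IsTriangulated
  iLowerTr : letI := iLowerCS; iLower.IsTriangulated
  iShriekTr : letI := iShriekCS; iShriek.IsTriangulated
  jShriekTr : letI := jShriekCS; jShriek.IsTriangulated
  jStarTr : letI := jStarCS; jStar.IsTriangulated
  jLowerTr : letI := jLowerCS; jLower.IsTriangulated
  adj₁ : iStar ⊣ iLower
  adj₂ : iLower ⊣ iShriek
  adj₃ : jShriek ⊣ jStar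
  adj₄ : jStar ⊣ jLower
  iLowerFF : iLower.FullyFaithful
  jShriekFF : jShriek.FullyFaithful
  jLowerFF : jLower.FullyFaithful
  jStar_iLower_zero : ∀ X : T₁, IsZero (jStar.obj (iLower.obj X))
  tri₁ : ∀ X : T, ∃ h : iLower.obj (iStar.obj X) ⟶ (jShriek.obj (jStar.obj X))⟦(1 : ℤ)⟧,
    Triangle.mk (adj₃.counit.app X) (adj₁.unit.app X) h ∈ distTriang T
  tri₂ : ∀ X : T, ∃ h : jLower.obj (jStar.obj X) ⟶ (iLower.obj (iShriek.obj X))⟦(1 : ℤ)⟧,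
    Triangle.mk (adj₂.counit.app X) (adj₄.unit.app X) h ∈ distTriang T

/-- A recollement of (plain) categories: six functors, four adjunctions, three full
embeddings, and `j^* ∘ i_* = 0`. -/
structure CatRecollement (T₁ T T₂ : Type*) [Category T₁] [Category T] [Category T₂] where
  iStar : T ⥤ T₁
  iLower : T₁ ⥤ T
  iShriek : T ⥤ T₁
  jShriek : T₂ ⥤ T
  jStar : T ⥤ T₂
  jLower : T₂ ⥤ T
  adj₁ : iStar ⊣ iLower
  adj₂ : iLower ⊣ iShriek
  adj₃ : jShriek ⊣ jStar
  adj₄ : jStar ⊣ jLower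
  iLowerFF : iLower.FullyFaithful
  jShriekFF : jShriek.FullyFaithful
  jLowerFF : jLower.FullyFaithful
  jStar_iLower_zero : ∀ X : T₁, IsZero (jStar.obj (iLower.obj X))

/-- The class of morphisms whose cone lies in `S`; localizing at it gives the Verdier
quotient by the thick subcategory `S`. -/
def coneW {D : Type*} [Category D] [HasShift D ℤ] [Preadditive D] [HasZeroObject D]
    [∀ n : ℤ, (shiftFunctor D n).Additive] [Pretriangulated D] (S : Set D) :
    MorphismProperty D :=
  fun X Y f => ∃ (Z : D) (g : Y ⟶ Z) (h : Z ⟶ X⟦(1 : ℤ)⟧),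
    (Triangle.mk f g h ∈ distTriang D) ∧ Z ∈ S

/-- In any localization of a category with zero morphisms, the image of a zero object
is a zero object. -/
lemma isZero_Q_obj_of_isZero {C : Type*} [Category C] [HasZeroMorphisms C]
    (W : MorphismProperty C) (Z : C) (hZ : IsZero Z) : IsZero (W.Q.obj Z) := by
  let zTo : ∀ (X : W.Localization), W.Q.obj Z ⟶ X := fun X =>
    W.Q.map (0 : Z ⟶ X.as.obj)
  let zFrom : ∀ (X : W.Localization), X ⟶ W.Q.obj Z := fun X =>
    W.Q.map (0 : X.as.obj ⟶ Z)
  have hTo : ∀ {X Y : W.Localization} (φ : X ⟶ Y), zTo X ≫ φ = zTo Y := by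
    let P : MorphismProperty W.Localization := fun X Y φ => zTo X ≫ φ = zTo Y
    haveI : P.IsStableUnderComposition := ⟨fun φ ψ hφ hψ => by
      change zTo _ ≫ _ ≫ _ = zTo _
      rw [← Category.assoc]
      change (zTo _ ≫ _) ≫ _ = zTo _
      rw [hφ, hψ]⟩
    have h : P = ⊤ := by
      apply Localization.Construction.morphismProperty_eq_top'
      · intro X Y f
        change W.Q.map (0 : Z ⟶ X) ≫ W.Q.map f = W.Q.map (0 : Z ⟶ Y)
        rw [← W.Q.map_comp, zero_comp]
      · intro X Y e he
        change zTo X ≫ e.hom = zTo Y at he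
        change zTo Y ≫ e.inv = zTo X
        rw [← he, Category.assoc, e.hom_inv_id, Category.comp_id]
    intro X Y φ
    have h' : (⊤ : MorphismProperty W.Localization) φ := MorphismProperty.top_apply φ
    rw [← h] at h'
    exact h'
  have hFrom : ∀ {X Y : W.Localization} (φ : X ⟶ Y), φ ≫ zFrom Y = zFrom X := by
    let P : MorphismProperty W.Localization := fun X Y φ => φ ≫ zFrom Y = zFrom X
    haveI : P.IsStableUnderComposition := ⟨fun φ ψ hφ hψ => by
      change (_ ≫ _) ≫ zFrom _ = zFrom _
      rw [Category.assoc]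
      change _ ≫ (_ ≫ zFrom _) = zFrom _
      rw [hψ, hφ]⟩
    have h : P = ⊤ := by
      apply Localization.Construction.morphismProperty_eq_top'
      · intro X Y f
        change W.Q.map f ≫ W.Q.map (0 : Y ⟶ Z) = W.Q.map (0 : X ⟶ Z)
        rw [← W.Q.map_comp, comp_zero]
      · intro X Y e he
        change e.hom ≫ zFrom Y = zFrom X at he
        change e.inv ≫ zFrom X = zFrom Y
        rw [← he, ← Category.assoc, e.inv_hom_id, Category.id_comp]
    intro X Y φ
    have h' : (⊤ : MorphismProperty W.Localization) φ := MorphismProperty.top_apply φ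
    rw [← h] at h'
    exact h'
  have hid : zTo (W.Q.obj Z) = 𝟙 (W.Q.obj Z) := by
    change W.Q.map (0 : Z ⟶ Z) = _
    rw [hZ.eq_of_src (0 : Z ⟶ Z) (𝟙 Z), W.Q.map_id]
  have hid' : zFrom (W.Q.obj Z) = 𝟙 (W.Q.obj Z) := by
    change W.Q.map (0 : Z ⟶ Z) = _
    rw [hZ.eq_of_src (0 : Z ⟶ Z) (𝟙 Z), W.Q.map_id]
  constructor
  · intro Y
    refine ⟨⟨⟨zTo Y⟩, fun f => ?_⟩⟩
    change f = zTo Y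
    rw [← hTo f, hid, Category.id_comp]
  · intro Y
    refine ⟨⟨⟨zFrom Y⟩, fun f => ?_⟩⟩
    change f = zFrom Y
    rw [← hFrom f, hid', Category.comp_id]

/-- A triangulated functor maps the class of morphisms with cone in `S` into the class of
morphisms with cone in `S'`, provided it maps `S` into `S'`. -/
lemma coneW_map_aux {C C' : Type*} [Category C] [Category C']
    [HasShift C ℤ] [HasShift C' ℤ] [Preadditive C] [Preadditive C']
    [HasZeroObject C] [HasZeroObject C']
    [∀ n : ℤ, (shiftFunctor C n).Additive] [∀ n : ℤ, (shiftFunctor C' n).Additive]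
    [Pretriangulated C] [Pretriangulated C']
    (F : C ⥤ C') [F.CommShift ℤ] [F.IsTriangulated]
    {S : Set C} {S' : Set C'} (hF : ∀ Z ∈ S, F.obj Z ∈ S')
    {X Y : C} (f : X ⟶ Y)
    (hf : ∃ (Z : C) (g : Y ⟶ Z) (h : Z ⟶ X⟦(1 : ℤ)⟧),
      (Triangle.mk f g h ∈ distTriang C) ∧ Z ∈ S) :
    ∃ (Z : C') (g : F.obj Y ⟶ Z) (h : Z ⟶ (F.obj X)⟦(1 : ℤ)⟧),
      (Triangle.mk (F.map f) g h ∈ distTriang C') ∧ Z ∈ S' := by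
  obtain ⟨Z, g, h, hT, hZ⟩ := hf
  exact ⟨F.obj Z, F.map g, F.map h ≫ (F.commShiftIso (1 : ℤ)).hom.app X,
    F.map_distinguished _ hT, hF Z hZ⟩

/-- If the counit of an adjunction is an isomorphism, so is the counit of the localized
adjunction. -/
lemma isIso_localization_counit {C₁ C₂ : Type*} [Category C₁] [Category C₂]
    {G : C₁ ⥤ C₂} {F : C₂ ⥤ C₁} (adj : G ⊣ F)
    (W₁ : MorphismProperty C₁) (W₂ : MorphismProperty C₂)
    (G' : W₁.Localization ⥤ W₂.Localization) (F' : W₂.Localization ⥤ W₁.Localization)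
    [CatCommSq G W₁.Q W₂.Q G'] [CatCommSq F W₂.Q W₁.Q F']
    [IsIso adj.counit] :
    IsIso (adj.localization W₁.Q W₁ W₂.Q W₂ G' F').counit := by
  haveI : ∀ (Y : W₂.Localization),
      IsIso ((adj.localization W₁.Q W₁ W₂.Q W₂ G' F').counit.app Y) := by
    rintro ⟨⟨y⟩⟩
    show IsIso ((adj.localization W₁.Q W₁ W₂.Q W₂ G' F').counit.app (W₂.Q.obj y))
    rw [Adjunction.localization_counit_app]
    infer_instance
  exact NatIso.isIso_of_isIso_app _

/-- If the unit of an adjunction is an isomorphism, so is the unit of the localized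
adjunction. -/
lemma isIso_localization_unit {C₁ C₂ : Type*} [Category C₁] [Category C₂]
    {G : C₁ ⥤ C₂} {F : C₂ ⥤ C₁} (adj : G ⊣ F)
    (W₁ : MorphismProperty C₁) (W₂ : MorphismProperty C₂)
    (G' : W₁.Localization ⥤ W₂.Localization) (F' : W₂.Localization ⥤ W₁.Localization)
    [CatCommSq G W₁.Q W₂.Q G'] [CatCommSq F W₂.Q W₁.Q F']
    [IsIso adj.unit] :
    IsIso (adj.localization W₁.Q W₁ W₂.Q W₂ G' F').unit := by
  haveI : ∀ (Y : W₁.Localization),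
      IsIso ((adj.localization W₁.Q W₁ W₂.Q W₂ G' F').unit.app Y) := by
    rintro ⟨⟨y⟩⟩
    show IsIso ((adj.localization W₁.Q W₁ W₂.Q W₂ G' F').unit.app (W₁.Q.obj y))
    rw [Adjunction.localization_unit_app]
    infer_instance
  exact NatIso.isIso_of_isIso_app _

/-- Proposition: a recollement of triangulated categories induces a recollement of the
Verdier quotients by a thick subcategory `S ⊆ D` and its images `S₁ = i^*S`, `S₂ = j^*S`,
provided `i_*S₁ ⊆ S` and `j_*S₂ ⊆ S`.  The induced functors commute with the quotient
functors. -/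
theorem recollement_of_verdier_quotients
    (D₁ D D₂ : Type*) [Category D₁] [Category D] [Category D₂]
    [HasShift D₁ ℤ] [HasShift D ℤ] [HasShift D₂ ℤ]
    [Preadditive D₁] [Preadditive D] [Preadditive D₂]
    [HasZeroObject D₁] [HasZeroObject D] [HasZeroObject D₂]
    [∀ n : ℤ, (shiftFunctor D₁ n).Additive] [∀ n : ℤ, (shiftFunctor D n).Additive]
    [∀ n : ℤ, (shiftFunctor D₂ n).Additive]
    [Pretriangulated D₁] [Pretriangulated D] [Pretriangulated D₂]
    (R : Recollement D₁ D D₂) (S : Set D)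
    -- `S` is a thick (triangulated, closed under direct summands) subcategory:
    (hzero : ∀ Z : D, IsZero Z → Z ∈ S)
    (hiso : ∀ X Y : D, (X ≅ Y) → X ∈ S → Y ∈ S)
    (hshift : ∀ (X : D) (n : ℤ), X ∈ S → X⟦n⟧ ∈ S)
    (hext : ∀ T : Triangle D, (T ∈ distTriang D) → T.obj₁ ∈ S → T.obj₃ ∈ S → T.obj₂ ∈ S)
    (hsummand : ∀ (X Y : D) (ι : X ⟶ Y) (r : Y ⟶ X), ι ≫ r = 𝟙 X → Y ∈ S → X ∈ S) :
    -- the images `S₁ = i^* S` and `S₂ = j^* S`: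
    ∀ (S₁ : Set D₁) (S₂ : Set D₂),
      S₁ = {Z : D₁ | ∃ X ∈ S, Nonempty (Z ≅ R.iStar.obj X)} →
      S₂ = {Z : D₂ | ∃ X ∈ S, Nonempty (Z ≅ R.jStar.obj X)} →
      (∀ Z ∈ S₁, R.iLower.obj Z ∈ S) →
      (∀ Z ∈ S₂, R.jLower.obj Z ∈ S) →
      ∃ R' : CatRecollement (coneW S₁).Localization (coneW S).Localization
          (coneW S₂).Localization,
        Nonempty ((coneW S).Q ⋙ R'.iStar ≅ R.iStar ⋙ (coneW S₁).Q) ∧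
        Nonempty ((coneW S₁).Q ⋙ R'.iLower ≅ R.iLower ⋙ (coneW S).Q) ∧
        Nonempty ((coneW S).Q ⋙ R'.iShriek ≅ R.iShriek ⋙ (coneW S₁).Q) ∧
        Nonempty ((coneW S₂).Q ⋙ R'.jShriek ≅ R.jShriek ⋙ (coneW S).Q) ∧
        Nonempty ((coneW S).Q ⋙ R'.jStar ≅ R.jStar ⋙ (coneW S₂).Q) ∧
        Nonempty ((coneW S₂).Q ⋙ R'.jLower ≅ R.jLower ⋙ (coneW S).Q) := by
  intro S₁ S₂ hS₁ hS₂ hiS hjS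
  letI := R.iStarCS; letI := R.iLowerCS; letI := R.iShriekCS
  letI := R.jShriekCS; letI := R.jStarCS; letI := R.jLowerCS
  haveI := R.iStarTr; haveI := R.iLowerTr; haveI := R.iShriekTr
  haveI := R.jShriekTr; haveI := R.jStarTr; haveI := R.jLowerTr
  haveI := R.iLowerFF.full; haveI := R.iLowerFF.faithful
  haveI := R.jShriekFF.full; haveI := R.jShriekFF.faithful
  haveI := R.jLowerFF.full; haveI := R.jLowerFF.faithful
  -- closure of `S` under "extension to the left" in a distinguished triangle
  have key : ∀ (T : Triangle D), (T ∈ distTriang D) → T.obj₂ ∈ S → T.obj₃ ∈ S →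
      T.obj₁ ∈ S := fun T hT h2 h3 =>
    hext _ (inv_rot_of_distTriang _ hT) (hshift _ (-1) h3) h2
  -- the six object-membership statements
  have hmi : ∀ Z ∈ S, R.iStar.obj Z ∈ S₁ := fun Z hZ => by
    rw [hS₁]; exact ⟨Z, hZ, ⟨Iso.refl _⟩⟩
  have hmj : ∀ Z ∈ S, R.jStar.obj Z ∈ S₂ := fun Z hZ => by
    rw [hS₂]; exact ⟨Z, hZ, ⟨Iso.refl _⟩⟩
  have hmjsh : ∀ Z ∈ S₂, R.jShriek.obj Z ∈ S := by
    intro Z hZ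
    rw [hS₂] at hZ
    obtain ⟨X, hX, ⟨e⟩⟩ := hZ
    obtain ⟨h3, hT⟩ := R.tri₁ X
    have h1 : R.jShriek.obj (R.jStar.obj X) ∈ S :=
      key _ hT hX (hiS _ (hmi X hX))
    exact hiso _ _ (R.jShriek.mapIso e.symm) h1
  have hmish : ∀ X ∈ S, R.iShriek.obj X ∈ S₁ := by
    intro X hX
    obtain ⟨h3, hT⟩ := R.tri₂ X
    have h1 : R.iLower.obj (R.iShriek.obj X) ∈ S :=
      key _ hT hX (hjS _ (hmj X hX))
    rw [hS₁]
    exact ⟨R.iLower.obj (R.iShriek.obj X), h1,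
      ⟨(asIso (R.adj₁.counit.app (R.iShriek.obj X))).symm⟩⟩
  -- the six functors invert the relevant morphisms after composing with `Q`
  have hinv₁ : (coneW S).IsInvertedBy (R.iStar ⋙ (coneW S₁).Q) :=
    fun X Y f hf => (coneW S₁).Q_inverts _ (coneW_map_aux R.iStar hmi f hf)
  have hinv₂ : (coneW S₁).IsInvertedBy (R.iLower ⋙ (coneW S).Q) :=
    fun X Y f hf => (coneW S).Q_inverts _ (coneW_map_aux R.iLower hiS f hf)
  have hinv₃ : (coneW S).IsInvertedBy (R.iShriek ⋙ (coneW S₁).Q) :=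
    fun X Y f hf => (coneW S₁).Q_inverts _ (coneW_map_aux R.iShriek hmish f hf)
  have hinv₄ : (coneW S₂).IsInvertedBy (R.jShriek ⋙ (coneW S).Q) :=
    fun X Y f hf => (coneW S).Q_inverts _ (coneW_map_aux R.jShriek hmjsh f hf)
  have hinv₅ : (coneW S).IsInvertedBy (R.jStar ⋙ (coneW S₂).Q) :=
    fun X Y f hf => (coneW S₂).Q_inverts _ (coneW_map_aux R.jStar hmj f hf)
  have hinv₆ : (coneW S₂).IsInvertedBy (R.jLower ⋙ (coneW S).Q) :=
    fun X Y f hf => (coneW S).Q_inverts _ (coneW_map_aux R.jLower hjS f hf)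
  -- the induced functors on localizations
  let iStar' := Localization.Construction.lift _ hinv₁
  let iLower' := Localization.Construction.lift _ hinv₂
  let iShriek' := Localization.Construction.lift _ hinv₃
  let jShriek' := Localization.Construction.lift _ hinv₄
  let jStar' := Localization.Construction.lift _ hinv₅
  let jLower' := Localization.Construction.lift _ hinv₆
  have fac₁ : (coneW S).Q ⋙ iStar' = R.iStar ⋙ (coneW S₁).Q :=
    Localization.Construction.fac _ hinv₁
  have fac₂ : (coneW S₁).Q ⋙ iLower' = R.iLower ⋙ (coneW S).Q :=
    Localization.Construction.fac _ hinv₂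
  have fac₃ : (coneW S).Q ⋙ iShriek' = R.iShriek ⋙ (coneW S₁).Q :=
    Localization.Construction.fac _ hinv₃
  have fac₄ : (coneW S₂).Q ⋙ jShriek' = R.jShriek ⋙ (coneW S).Q :=
    Localization.Construction.fac _ hinv₄
  have fac₅ : (coneW S).Q ⋙ jStar' = R.jStar ⋙ (coneW S₂).Q :=
    Localization.Construction.fac _ hinv₅
  have fac₆ : (coneW S₂).Q ⋙ jLower' = R.jLower ⋙ (coneW S).Q :=
    Localization.Construction.fac _ hinv₆
  haveI : CatCommSq R.iStar (coneW S).Q (coneW S₁).Q iStar' := ⟨eqToIso fac₁.symm⟩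
  haveI : CatCommSq R.iLower (coneW S₁).Q (coneW S).Q iLower' := ⟨eqToIso fac₂.symm⟩
  haveI : CatCommSq R.iShriek (coneW S).Q (coneW S₁).Q iShriek' := ⟨eqToIso fac₃.symm⟩
  haveI : CatCommSq R.jShriek (coneW S₂).Q (coneW S).Q jShriek' := ⟨eqToIso fac₄.symm⟩
  haveI : CatCommSq R.jStar (coneW S).Q (coneW S₂).Q jStar' := ⟨eqToIso fac₅.symm⟩
  haveI : CatCommSq R.jLower (coneW S₂).Q (coneW S).Q jLower' := ⟨eqToIso fac₆.symm⟩
  -- the localized adjunctions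
  let adj1' := R.adj₁.localization (coneW S).Q (coneW S) (coneW S₁).Q (coneW S₁)
    iStar' iLower'
  let adj2' := R.adj₂.localization (coneW S₁).Q (coneW S₁) (coneW S).Q (coneW S)
    iLower' iShriek'
  let adj3' := R.adj₃.localization (coneW S₂).Q (coneW S₂) (coneW S).Q (coneW S)
    jShriek' jStar'
  let adj4' := R.adj₄.localization (coneW S).Q (coneW S) (coneW S₂).Q (coneW S₂)
    jStar' jLower'
  haveI : IsIso adj1'.counit :=
    isIso_localization_counit R.adj₁ (coneW S) (coneW S₁) iStar' iLower'
  haveI : IsIso adj3'.unit :=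
    isIso_localization_unit R.adj₃ (coneW S₂) (coneW S) jShriek' jStar'
  haveI : IsIso adj4'.counit :=
    isIso_localization_counit R.adj₄ (coneW S) (coneW S₂) jStar' jLower'
  -- vanishing of `j^* ∘ i_*` on the localizations
  have hz : ∀ X : (coneW S₁).Localization, IsZero (jStar'.obj (iLower'.obj X)) := by
    rintro ⟨⟨x⟩⟩
    show IsZero (jStar'.obj (iLower'.obj ((coneW S₁).Q.obj x)))
    rw [show iLower'.obj ((coneW S₁).Q.obj x) = (coneW S).Q.obj (R.iLower.obj x) from
        Functor.congr_obj fac₂ x,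
      show jStar'.obj ((coneW S).Q.obj (R.iLower.obj x)) =
          (coneW S₂).Q.obj (R.jStar.obj (R.iLower.obj x)) from
        Functor.congr_obj fac₅ (R.iLower.obj x)]
    exact isZero_Q_obj_of_isZero _ _ (R.jStar_iLower_zero x)
  exact ⟨{ iStar := iStar', iLower := iLower', iShriek := iShriek',
           jShriek := jShriek', jStar := jStar', jLower := jLower',
           adj₁ := adj1', adj₂ := adj2', adj₃ := adj3', adj₄ := adj4',
           iLowerFF := adj1'.fullyFaithfulROfIsIsoCounit,
           jShriekFF := adj3'.fullyFaithfulLOfIsIsoUnit,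
           jLowerFF := adj4'.fullyFaithfulROfIsIsoCounit,
           jStar_iLower_zero := hz },
    ⟨eqToIso fac₁⟩, ⟨eqToIso fac₂⟩, ⟨eqToIso fac₃⟩,
    ⟨eqToIso fac₄⟩, ⟨eqToIso fac₅⟩, ⟨eqToIso fac₆⟩⟩
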